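/- arXiv:2209.09242 — 8 statements merged into one kernel-verified Lean document; each statement's English description precedes it below -/
import Mathlib

section
/- A prefix is alive if and only if it is the prefix of an alive k-mer. Precisely: for every j with 0 ≤ j ≤ k and every p ∈ A^j, one has (∏_{l=0}^{j−1} W(l, p_l)) · L_j > ε if and only if there exists an alive k-mer w ∈ Z whose first j characters agree with p (i.e., w_l = p_l for all l < j). -/
open Finset

noncomputable def colMax {A : Type*} [Fintype A] [Nonempty A] (W : ℕ → A → ℝ) (h : ℕ) : ℝ :=
  Finset.univ.sup' Finset.univ_nonempty (W h)

noncomputable def lookahead {A : Type*} [Fintype A] [Nonempty A]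
    (k : ℕ) (W : ℕ → A → ℝ) (j : ℕ) : ℝ :=
  ∏ h ∈ Finset.Ico j k, colMax W h

noncomputable def prefScore {A : Type*} (W : ℕ → A → ℝ) {j : ℕ} (p : Fin j → A) : ℝ :=
  ∏ l : Fin j, W l (p l)

def PrefixAlive {A : Type*} [Fintype A] [Nonempty A]
    (k : ℕ) (W : ℕ → A → ℝ) (ε : ℝ) {j : ℕ} (p : Fin j → A) : Prop :=
  prefScore W p * lookahead k W j > ε

noncomputable def score {A : Type*} (k : ℕ) (W : ℕ → A → ℝ) (w : Fin k → A) : ℝ :=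
  ∏ j : Fin k, W j (w j)

/-- A prefix is alive if and only if it is the prefix of an alive k-mer. -/
theorem prefix_alive_iff_prefix_of_alive_kmer
    {A : Type*} [Fintype A] [Nonempty A]
    (k : ℕ) (hk : 1 ≤ k) (W : ℕ → A → ℝ) (hW : ∀ j a, 0 ≤ W j a)
    (ε : ℝ) (hε : 0 ≤ ε) (j : ℕ) (hj : j ≤ k) (p : Fin j → A) :
    PrefixAlive k W ε p ↔
      ∃ w : Fin k → A, score k W w > ε ∧ ∀ l : Fin j, w (Fin.castLE hj l) = p l := by
  have hmax : ∀ h : ℕ, ∃ a : A, colMax W h = W h a := fun h =>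
    Finset.exists_mem_eq_sup' Finset.univ_nonempty (W h) |>.imp (fun a ha => ha.2)
  classical
  constructor
  · intro hp
    set m : ℕ → A := fun h => Classical.choose (hmax h) with hm
    have hmspec : ∀ h : ℕ, colMax W h = W h (m h) := fun h => Classical.choose_spec (hmax h)
    set g : ℕ → A := fun i => if h : i < j then p ⟨i, h⟩ else m i with hg
    refine ⟨fun i => g i, ?_, ?_⟩
    · have hscore : score k W (fun i : Fin k => g i) = ∏ i ∈ Finset.range k, W i (g i) := by
        exact Fin.prod_univ_eq_prod_range (fun i => W i (g i)) k
      have hsplit : (∏ i ∈ Finset.range j, W i (g i)) * ∏ i ∈ Finset.Ico j k, W i (g i)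
          = ∏ i ∈ Finset.range k, W i (g i) := Finset.prod_range_mul_prod_Ico _ hj
      have h1 : (∏ i ∈ Finset.range j, W i (g i)) = prefScore W p := by
        rw [prefScore, ← Fin.prod_univ_eq_prod_range (fun i => W i (g i)) j]
        refine Finset.prod_congr rfl fun l _ => ?_
        simp [hg, l.isLt]
      have h2 : (∏ i ∈ Finset.Ico j k, W i (g i)) = lookahead k W j := by
        rw [lookahead]
        refine Finset.prod_congr rfl fun i hi => ?_
        have hij : ¬ i < j := not_lt.mpr (Finset.mem_Ico.mp hi).1
        simp [hg, hij, hmspec i]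
      rw [hscore, ← hsplit, h1, h2]
      exact hp
    · intro l
      have : (↑(Fin.castLE hj l) : ℕ) < j := l.isLt
      simp only [hg, this, dif_pos]
      exact congrArg p (Fin.ext rfl)
  · rintro ⟨w, hw, hwp⟩
    set g : ℕ → A := fun i => if h : i < k then w ⟨i, h⟩ else Classical.arbitrary A with hg
    have hscore : score k W w = ∏ i ∈ Finset.range k, W i (g i) := by
      rw [score, ← Fin.prod_univ_eq_prod_range (fun i => W i (g i)) k]
      refine Finset.prod_congr rfl fun i _ => ?_
      simp [hg, i.isLt]
    have hsplit : (∏ i ∈ Finset.range j, W i (g i)) * ∏ i ∈ Finset.Ico j k, W i (g i)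
        = ∏ i ∈ Finset.range k, W i (g i) := Finset.prod_range_mul_prod_Ico _ hj
    have h1 : (∏ i ∈ Finset.range j, W i (g i)) = prefScore W p := by
      rw [prefScore, ← Fin.prod_univ_eq_prod_range (fun i => W i (g i)) j]
      refine Finset.prod_congr rfl fun l _ => ?_
      have hik : (l : ℕ) < k := lt_of_lt_of_le l.isLt hj
      have := hwp l
      simp only [hg, hik, dif_pos]
      simpa [Fin.castLE] using congrArg (W l) this
    have h2 : (∏ i ∈ Finset.Ico j k, W i (g i)) ≤ lookahead k W j := by
      rw [lookahead]
      refine Finset.prod_le_prod (fun i _ => hW _ _) fun i _ => ?_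
      exact Finset.le_sup' (W i) (Finset.mem_univ (g i))
    have hpre : 0 ≤ prefScore W p := Finset.prod_nonneg fun i _ => hW _ _
    calc ε < score k W w := hw
      _ = prefScore W p * ∏ i ∈ Finset.Ico j k, W i (g i) := by rw [hscore, ← hsplit, h1]
      _ ≤ prefScore W p * lookahead k W j := mul_le_mul_of_nonneg_left h2 hpre
end

section
/- The total number of alive prefixes over all positive lengths is at most k times the number of alive k-mers: ∑_{j=1}^{k} |{p ∈ A^j : p is alive}| ≤ k · |Z|. -/
open Finset

noncomputable def maxArg {A : Type*} [Fintype A] [Nonempty A] (W : ℕ → A → ℝ) (h : ℕ) : A :=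
  (Finset.exists_mem_eq_sup' Finset.univ_nonempty (W h)).choose

lemma maxArg_spec {A : Type*} [Fintype A] [Nonempty A] (W : ℕ → A → ℝ) (h : ℕ) :
    W h (maxArg W h) = colMax W h :=
  ((Finset.exists_mem_eq_sup' Finset.univ_nonempty (W h)).choose_spec.2).symm

noncomputable def extPref {A : Type*} [Fintype A] [Nonempty A] (W : ℕ → A → ℝ)
    {j k : ℕ} (hj : j ≤ k) (p : Fin j → A) : Fin k → A :=
  fun i => if h : (i : ℕ) < j then p ⟨i, h⟩ else maxArg W i

lemma score_extPref {A : Type*} [Fintype A] [Nonempty A] (W : ℕ → A → ℝ)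
    {j k : ℕ} (hj : j ≤ k) (p : Fin j → A) :
    score k W (extPref W hj p) = prefScore W p * lookahead k W j := by
  have h1 : score k W (extPref W hj p)
      = ∏ i ∈ Finset.range k, (if h : i < j then W i (p ⟨i, h⟩) else colMax W i) := by
    rw [score, ← Fin.prod_univ_eq_prod_range]
    apply Finset.prod_congr rfl
    intro i _
    by_cases h : (i : ℕ) < j
    · simp [extPref, h]
    · simp [extPref, h, maxArg_spec]
  rw [h1, ← Finset.prod_range_mul_prod_Ico _ hj]
  congr 1
  · rw [prefScore, ← Fin.prod_univ_eq_prod_range (fun i => _)]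
    apply Finset.prod_congr rfl
    intro i _
    simp [i.isLt]
  · rw [lookahead]
    apply Finset.prod_congr rfl
    intro i hi
    simp [Finset.mem_Ico] at hi
    simp [not_lt.mpr hi.1]

lemma extPref_injective {A : Type*} [Fintype A] [Nonempty A] (W : ℕ → A → ℝ)
    {j k : ℕ} (hj : j ≤ k) : Function.Injective (extPref W hj) := by
  intro p q h
  funext l
  have := congrFun h ⟨l, lt_of_lt_of_le l.isLt hj⟩
  simpa [extPref, l.isLt] using this

/-- The total number of alive prefixes over all positive lengths is at most `k · |Z|`. -/
theorem total_alive_prefixes_le_k_mul_Z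
    {A : Type*} [Fintype A] [Nonempty A]
    (k : ℕ) (hk : 1 ≤ k) (W : ℕ → A → ℝ) (hW : ∀ j a, 0 ≤ W j a)
    (ε : ℝ) (hε : 0 ≤ ε) :
    ∑ j ∈ Finset.Icc 1 k, Set.ncard {p : Fin j → A | PrefixAlive k W ε p} ≤
      k * Set.ncard {w : Fin k → A | score k W w > ε} := by
  have key : ∀ j ∈ Finset.Icc 1 k,
      Set.ncard {p : Fin j → A | PrefixAlive k W ε p} ≤
        Set.ncard {w : Fin k → A | score k W w > ε} := by
    intro j hj
    simp only [Finset.mem_Icc] at hj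
    apply Set.ncard_le_ncard_of_injOn (extPref W hj.2)
    · intro p hp
      simp only [Set.mem_setOf_eq] at hp ⊢
      rw [score_extPref]
      exact hp
    · exact (extPref_injective W hj.2).injOn
  calc ∑ j ∈ Finset.Icc 1 k, Set.ncard {p : Fin j → A | PrefixAlive k W ε p}
      ≤ ∑ _j ∈ Finset.Icc 1 k, Set.ncard {w : Fin k → A | score k W w > ε} :=
        Finset.sum_le_sum key
    _ = k * Set.ncard {w : Fin k → A | score k W w > ε} := by
        rw [Finset.sum_const, Nat.card_Icc]
        simp [smul_eq_mul]
end

section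
/- (Node-count bound underlying Theorem 1, 'Depth-first branch-and-bound runs in O(k·|Z|) time'.) If Z is nonempty, then the total number of strings visited by depth-first branch-and-bound with the lookahead bound, namely strings of positive length whose longest proper prefix is alive, satisfies ∑_{j=1}^{k} |{p ∈ A^j : the length-(j−1) prefix of p is alive}| ≤ σ · k · |Z| (here the empty prefix is counted as alive when L_0 > ε). -/
open Finset

lemma key_bound {A : Type*} [Fintype A] [Nonempty A]
    (k : ℕ) (W : ℕ → A → ℝ) (ε : ℝ) (j : ℕ) (hj : j < k) :
    Set.ncard {p : Fin (j + 1) → A |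
        PrefixAlive k W ε (fun l : Fin j => p l.castSucc)} ≤
      Fintype.card A * Set.ncard {w : Fin k → A | score k W w > ε} := by
  classical
  -- greedy choice
  have hg : ∀ h : ℕ, ∃ b : A, colMax W h = W h b := by
    intro h
    obtain ⟨b, -, hb⟩ := Finset.exists_mem_eq_sup' Finset.univ_nonempty (W h)
    exact ⟨b, hb⟩
  choose g hgspec using hg
  set S := {p : Fin (j + 1) → A | PrefixAlive k W ε (fun l : Fin j => p l.castSucc)}
  set Z := {w : Fin k → A | score k W w > ε} with hZdef
  -- extension map
  set ext : (Fin (j + 1) → A) → (Fin k → A) :=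
    fun p i => if h : (i : ℕ) < j then p ⟨i, Nat.lt_succ_of_lt h⟩ else g i with hext
  have hscore : ∀ p : Fin (j + 1) → A,
      score k W (ext p) = prefScore W (fun l : Fin j => p l.castSucc) * lookahead k W j := by
    intro p
    have h1 : score k W (ext p)
        = ∏ i ∈ Finset.range k, W i (if h : i < j then p ⟨i, Nat.lt_succ_of_lt h⟩ else g i) := by
      rw [score, ← Fin.prod_univ_eq_prod_range
        (fun i => W i (if h : i < j then p ⟨i, Nat.lt_succ_of_lt h⟩ else g i)) k]
    rw [h1, Finset.range_eq_Ico, ← Finset.prod_Ico_consecutive _ (Nat.zero_le j) (le_of_lt hj)]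
    congr 1
    · rw [prefScore, ← Finset.range_eq_Ico,
        ← Fin.prod_univ_eq_prod_range (fun i => W i (if h : i < j then p ⟨i, Nat.lt_succ_of_lt h⟩ else g i)) j]
      apply Finset.prod_congr rfl
      intro i _
      have : (⟨(i : ℕ), Nat.lt_succ_of_lt i.isLt⟩ : Fin (j+1)) = i.castSucc := by
        apply Fin.ext; rfl
      simp [i.isLt, this]
    · rw [lookahead]
      apply Finset.prod_congr rfl
      intro i hi
      rw [Finset.mem_Ico] at hi
      simp [Nat.not_lt.mpr hi.1, hgspec]
  -- map into A × Z
  have hmem : ∀ p ∈ S, ext p ∈ Z := by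
    intro p hp
    have := hscore p
    simpa [hZdef, Set.mem_setOf_eq, this, S, PrefixAlive] using hp
  let F : S → A × Z := fun p => (p.1 (Fin.last j), ⟨ext p.1, hmem p.1 p.2⟩)
  have hinj : Function.Injective F := by
    intro p q hpq
    have h1 : p.1 (Fin.last j) = q.1 (Fin.last j) := congrArg Prod.fst hpq
    have h2 : ext p.1 = ext q.1 := congrArg (fun x => (Prod.snd x : Z).1) hpq
    apply Subtype.ext
    funext i
    induction i using Fin.lastCases with
    | last => exact h1
    | cast l =>
      have hl : (l : ℕ) < k := lt_trans l.isLt hj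
      have := congrFun h2 ⟨l, hl⟩
      simpa [hext, l.isLt, Fin.castSucc, Fin.castAdd, Fin.castLE] using this
  have hc : Nat.card S ≤ Nat.card (A × Z) := Nat.card_le_card_of_injective F hinj
  have hZfin : Z.Finite := Set.toFinite _
  rw [Nat.card_prod, Nat.card_coe_set_eq, Nat.card_coe_set_eq,
    Nat.card_eq_fintype_card] at hc
  exact hc

/-- Node-count bound for depth-first branch-and-bound: if `Z` is nonempty, the number of
visited strings (strings of positive length `j+1` whose longest proper prefix is alive)
is at most `σ · k · |Z|`. -/
theorem branch_and_bound_visited_nodes_bound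
    {A : Type*} [Fintype A] [Nonempty A]
    (k : ℕ) (hk : 1 ≤ k) (W : ℕ → A → ℝ) (hW : ∀ j a, 0 ≤ W j a)
    (ε : ℝ) (hε : 0 ≤ ε)
    (hZ : {w : Fin k → A | score k W w > ε}.Nonempty) :
    ∑ j ∈ Finset.range k,
        Set.ncard {p : Fin (j + 1) → A |
          PrefixAlive k W ε (fun l : Fin j => p l.castSucc)} ≤
      Fintype.card A * k * Set.ncard {w : Fin k → A | score k W w > ε} := by
  calc ∑ j ∈ Finset.range k,
        Set.ncard {p : Fin (j + 1) → A |
          PrefixAlive k W ε (fun l : Fin j => p l.castSucc)}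
      ≤ ∑ j ∈ Finset.range k,
          Fintype.card A * Set.ncard {w : Fin k → A | score k W w > ε} := by
        apply Finset.sum_le_sum
        intro j hj
        exact key_bound k W ε j (Finset.mem_range.mp hj)
    _ = Fintype.card A * k * Set.ncard {w : Fin k → A | score k W w > ε} := by
        rw [Finset.sum_const, Finset.card_range]
        ring
end

section
/- A suffix belongs to R if and only if it is the suffix of an alive k-mer. Precisely: for every m with 0 ≤ m ≤ k and every r ∈ A^{k−m}, one has M_left · ∏_{j=0}^{k−m−1} W(m+j, r_j) > ε if and only if there exists an alive k-mer w ∈ Z whose last k−m characters agree with r (i.e., w_{m+j} = r_j for all j < k−m). -/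
open Finset

lemma colMax_attained {A : Type*} [Fintype A] [Nonempty A] (W : ℕ → A → ℝ) (h : ℕ) :
    ∃ a : A, colMax W h = W h a := by
  obtain ⟨b, -, hb⟩ := Finset.exists_mem_eq_sup' (Finset.univ_nonempty (α := A)) (W h)
  exact ⟨b, hb⟩

lemma le_colMax {A : Type*} [Fintype A] [Nonempty A] (W : ℕ → A → ℝ) (h : ℕ) (a : A) :
    W h a ≤ colMax W h :=
  Finset.le_sup' (W h) (Finset.mem_univ a)

lemma score_split {A : Type*} (k : ℕ) (W : ℕ → A → ℝ) (m : ℕ) (hm : m ≤ k)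
    (w : Fin k → A) :
    score k W w =
      (∏ h ∈ Finset.range m, (if hh : h < k then W h (w ⟨h, hh⟩) else 1)) *
      (∏ j ∈ Finset.range (k - m), (if hh : m + j < k then W (m + j) (w ⟨m + j, hh⟩) else 1)) := by
  set F : ℕ → ℝ := fun n => if hh : n < k then W n (w ⟨n, hh⟩) else 1 with hF
  have h1 : score k W w = ∏ n ∈ Finset.range k, F n := by
    rw [← Fin.prod_univ_eq_prod_range F k]
    apply Finset.prod_congr rfl
    intro j _
    simp [hF, j.isLt]
  have h2 : ∏ n ∈ Finset.range k, F n = ∏ n ∈ Finset.range (m + (k - m)), F n := by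
    rw [Nat.add_sub_cancel' hm]
  rw [h1, h2, Finset.prod_range_add]

/-- A suffix belongs to `R` if and only if it is the suffix of an alive `k`-mer. -/
theorem suffix_in_R_iff_suffix_of_alive_kmer
    {A : Type*} [Fintype A] [Nonempty A]
    (k : ℕ) (hk : 1 ≤ k) (W : ℕ → A → ℝ) (hW : ∀ j a, 0 ≤ W j a)
    (ε : ℝ) (hε : 0 ≤ ε) (m : ℕ) (hm : m ≤ k) (r : Fin (k - m) → A) :
    (∏ h ∈ Finset.range m, colMax W h) * (∏ j : Fin (k - m), W (m + j) (r j)) > ε ↔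
      ∃ w : Fin k → A, score k W w > ε ∧
        ∀ j : Fin (k - m), w ⟨m + (j : ℕ), by have := j.isLt; omega⟩ = r j := by
  have hrprod : (∏ j : Fin (k - m), W (m + j) (r j))
      = ∏ j ∈ Finset.range (k - m), (if hh : j < k - m then W (m + j) (r ⟨j, hh⟩) else 1) := by
    rw [← Fin.prod_univ_eq_prod_range]
    apply Finset.prod_congr rfl
    intro j _
    simp [j.isLt]
  constructor
  · intro hbig
    choose g hg using colMax_attained W
    refine ⟨fun i => if hi : (i : ℕ) < m then g i else r ⟨(i : ℕ) - m, by omega⟩, ?_, ?_⟩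
    · have := score_split k W m hm
        (fun i => if hi : (i : ℕ) < m then g i else r ⟨(i : ℕ) - m, by omega⟩)
      rw [this]
      have e1 : (∏ h ∈ Finset.range m,
          (if hh : h < k then W h ((fun i : Fin k =>
            if hi : (i : ℕ) < m then g i else r ⟨(i : ℕ) - m, by omega⟩) ⟨h, hh⟩) else 1))
          = ∏ h ∈ Finset.range m, colMax W h := by
        apply Finset.prod_congr rfl
        intro h hh
        rw [Finset.mem_range] at hh
        have hhk : h < k := by omega
        simp only [dif_pos hhk, dif_pos hh]
        exact (hg h).symm
      have e2 : (∏ j ∈ Finset.range (k - m),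
          (if hh : m + j < k then W (m + j) ((fun i : Fin k =>
            if hi : (i : ℕ) < m then g i else r ⟨(i : ℕ) - m, by omega⟩) ⟨m + j, hh⟩) else 1))
          = ∏ j : Fin (k - m), W (m + j) (r j) := by
        rw [hrprod]
        apply Finset.prod_congr rfl
        intro j hj
        rw [Finset.mem_range] at hj
        have h1 : m + j < k := by omega
        have h2 : ¬ (m + j < m) := by omega
        simp only [dif_pos h1, dif_neg h2, dif_pos hj]
        congr 1
        refine congrArg r (Fin.ext ?_)
        show m + j - m = j
        omega
      rw [e1, e2]
      exact hbig
    · intro j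
      have h2 : ¬ (m + (j : ℕ) < m) := by omega
      simp only [dif_neg h2]
      refine congrArg r (Fin.ext ?_)
      show m + (j : ℕ) - m = (j : ℕ)
      omega
  · rintro ⟨w, hw, hagree⟩
    have hs := score_split k W m hm w
    have hle1 : (∏ h ∈ Finset.range m, (if hh : h < k then W h (w ⟨h, hh⟩) else 1))
        ≤ ∏ h ∈ Finset.range m, colMax W h := by
      apply Finset.prod_le_prod
      · intro h _
        split
        · exact hW _ _
        · exact zero_le_one
      · intro h hh
        rw [Finset.mem_range] at hh
        have hhk : h < k := by omega
        rw [dif_pos hhk]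
        exact le_colMax W h _
    have he2 : (∏ j ∈ Finset.range (k - m),
        (if hh : m + j < k then W (m + j) (w ⟨m + j, hh⟩) else 1))
        = ∏ j : Fin (k - m), W (m + j) (r j) := by
      rw [hrprod]
      apply Finset.prod_congr rfl
      intro j hj
      rw [Finset.mem_range] at hj
      have h1 : m + j < k := by omega
      rw [dif_pos h1, dif_pos hj]
      congr 1
      exact hagree ⟨j, hj⟩
    have hnn : (0 : ℝ) ≤ ∏ j : Fin (k - m), W (m + j) (r j) :=
      Finset.prod_nonneg fun j _ => hW _ _
    calc ε < score k W w := hw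
      _ = _ * _ := hs
      _ ≤ (∏ h ∈ Finset.range m, colMax W h) * (∏ j : Fin (k - m), W (m + j) (r j)) := by
          rw [he2]; exact mul_le_mul_of_nonneg_right hle1 hnn
end

section
/- (Upper bound of the prefix–suffix decomposition lemma.) For every m with 0 ≤ m ≤ k, the number of alive k-mers is at most the product of the number of alive prefixes and the number of alive suffixes: |Z| ≤ |L| · |R|. -/
open Finset

lemma ncard_sprod {α β : Type*} (s : Set α) (t : Set β) :
    Set.ncard (s ×ˢ t) = s.ncard * t.ncard := by
  rw [← Nat.card_coe_set_eq, ← Nat.card_coe_set_eq, ← Nat.card_coe_set_eq,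
    Nat.card_congr (Equiv.Set.prod s t), Nat.card_prod]

/-- Upper bound of the prefix–suffix decomposition lemma: `|Z| ≤ |L| · |R|`. -/
theorem Z_card_le_L_mul_R
    {A : Type*} [Fintype A] [Nonempty A]
    (k : ℕ) (hk : 1 ≤ k) (W : ℕ → A → ℝ) (hW : ∀ j a, 0 ≤ W j a)
    (ε : ℝ) (hε : 0 ≤ ε) (m : ℕ) (hm : m ≤ k) :
    Set.ncard {w : Fin k → A | score k W w > ε} ≤
      Set.ncard {l : Fin m → A |
          (∏ j : Fin m, W j (l j)) * (∏ h ∈ Finset.Ico m k, colMax W h) > ε} *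
      Set.ncard {r : Fin (k - m) → A |
          (∏ h ∈ Finset.range m, colMax W h) * (∏ j : Fin (k - m), W (m + j) (r j)) > ε} := by
  classical
  set Z := {w : Fin k → A | score k W w > ε} with hZ
  set L := {l : Fin m → A |
      (∏ j : Fin m, W j (l j)) * (∏ h ∈ Finset.Ico m k, colMax W h) > ε} with hL
  set R := {r : Fin (k - m) → A |
      (∏ h ∈ Finset.range m, colMax W h) * (∏ j : Fin (k - m), W (m + j) (r j)) > ε} with hR
  let f : (Fin k → A) → (Fin m → A) × (Fin (k - m) → A) :=
    fun w => (fun j => w (Fin.castLE hm j),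
              fun j => w ⟨m + j.1, by have := j.isLt; omega⟩)
  -- split the score
  have hsplit : ∀ w : Fin k → A,
      score k W w = (∏ j : Fin m, W j (w (Fin.castLE hm j))) *
        (∏ j : Fin (k - m), W (m + j.1) (w ⟨m + j.1, by have := j.isLt; omega⟩)) := by
    intro w
    set g : ℕ → ℝ := fun j => if h : j < k then W j (w ⟨j, h⟩) else 1 with hg
    have h1 : score k W w = ∏ j ∈ Finset.range k, g j := by
      rw [← Fin.prod_univ_eq_prod_range]
      unfold score
      apply Finset.prod_congr rfl
      intro j _
      simp [hg, j.isLt]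
    have h2 : (∏ j ∈ Finset.range m, g j) = ∏ j : Fin m, W j (w (Fin.castLE hm j)) := by
      rw [← Fin.prod_univ_eq_prod_range]
      apply Finset.prod_congr rfl
      intro j _
      have hj : (j : ℕ) < k := lt_of_lt_of_le j.isLt hm
      simp only [hg, dif_pos hj]
      rfl
    have h3 : (∏ j ∈ Finset.Ico m k, g j)
        = ∏ j : Fin (k - m), W (m + j.1) (w ⟨m + j.1, by have := j.isLt; omega⟩) := by
      rw [Finset.prod_Ico_eq_prod_range, ← Fin.prod_univ_eq_prod_range]
      apply Finset.prod_congr rfl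
      intro j _
      have hj : m + (j : ℕ) < k := by have := j.isLt; omega
      simp only [hg, dif_pos hj]
    rw [h1, ← Finset.prod_range_mul_prod_Ico g hm, h2, h3]
  have himg : f '' Z ⊆ L ×ˢ R := by
    rintro ⟨l, r⟩ ⟨w, hw, hfw⟩
    have hwε : ε < score k W w := hw
    rw [hsplit w] at hwε
    obtain ⟨hl, hr⟩ := Prod.mk.injEq .. ▸ hfw
    constructor
    · show ε < _
      subst hl
      calc ε < _ := hwε
        _ ≤ _ := by
          apply mul_le_mul_of_nonneg_left _ (Finset.prod_nonneg fun j _ => hW _ _)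
          calc (∏ j : Fin (k - m), W (m + j.1) (w ⟨m + j.1, by have := j.isLt; omega⟩))
              ≤ ∏ j : Fin (k - m), colMax W (m + j.1) :=
                Finset.prod_le_prod (fun j _ => hW _ _) (fun j _ => le_colMax W _ _)
            _ = ∏ h ∈ Finset.Ico m k, colMax W h := by
                rw [Finset.prod_Ico_eq_prod_range, ← Fin.prod_univ_eq_prod_range]
    · show ε < _
      subst hr
      calc ε < _ := hwε
        _ ≤ _ := by
          apply mul_le_mul_of_nonneg_right _ (Finset.prod_nonneg fun j _ => hW _ _)
          calc (∏ j : Fin m, W j (w (Fin.castLE hm j)))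
              ≤ ∏ j : Fin m, colMax W j :=
                Finset.prod_le_prod (fun j _ => hW _ _) (fun j _ => le_colMax W _ _)
            _ = ∏ h ∈ Finset.range m, colMax W h := Fin.prod_univ_eq_prod_range _ _
  have hinj : Set.InjOn f Z := by
    intro w1 _ w2 _ h
    obtain ⟨h1, h2⟩ := Prod.mk.injEq .. ▸ h
    funext i
    rcases lt_or_ge i.1 m with hi | hi
    · have := congrFun h1 ⟨i.1, hi⟩
      simpa [Fin.castLE] using this
    · have hi2 : i.1 - m < k - m := by have := i.isLt; omega
      have := congrFun h2 ⟨i.1 - m, hi2⟩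
      simp only at this
      convert this using 2 <;> [skip; skip] <;>·
        apply Fin.ext; simp; omega
  calc Set.ncard Z = Set.ncard (f '' Z) := (Set.ncard_image_of_injOn hinj).symm
    _ ≤ Set.ncard (L ×ˢ R) := Set.ncard_le_ncard himg (Set.toFinite _)
    _ = Set.ncard L * Set.ncard R := ncard_sprod L R
end

section
/- (Lower bound of the prefix–suffix decomposition lemma.) For every m with 0 ≤ m ≤ k, if Z is nonempty then |Z| ≥ |L| + |R| − 1. -/
open Finset

/-- Lower bound of the prefix–suffix decomposition lemma: if `Z` is nonempty then
`|Z| ≥ |L| + |R| − 1` (stated as `|L| + |R| ≤ |Z| + 1`). -/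
theorem L_add_R_le_Z_add_one
    {A : Type*} [Fintype A] [Nonempty A]
    (k : ℕ) (hk : 1 ≤ k) (W : ℕ → A → ℝ) (hW : ∀ j a, 0 ≤ W j a)
    (ε : ℝ) (hε : 0 ≤ ε) (m : ℕ) (hm : m ≤ k)
    (hZ : {w : Fin k → A | score k W w > ε}.Nonempty) :
    Set.ncard {l : Fin m → A |
        (∏ j : Fin m, W j (l j)) * (∏ h ∈ Finset.Ico m k, colMax W h) > ε} +
      Set.ncard {r : Fin (k - m) → A |
        (∏ h ∈ Finset.range m, colMax W h) * (∏ j : Fin (k - m), W (m + j) (r j)) > ε} ≤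
      Set.ncard {w : Fin k → A | score k W w > ε} + 1 := by
  classical
  have hex : ∀ h : ℕ, ∃ a : A, W h a = colMax W h := by
    intro h
    obtain ⟨a, -, ha⟩ := Finset.exists_mem_eq_sup' Finset.univ_nonempty (W h)
    exact ⟨a, ha.symm⟩
  choose astar hastar using hex
  set n' := k - m with hn'
  have hkmn : k = m + n' := (Nat.add_sub_cancel' hm).symm
  -- split lemma for scores
  have hsplit : ∀ w : Fin k → A,
      score k W w = (∏ j : Fin m, W j (w ⟨j, j.2.trans_le hm⟩)) *
        ∏ j : Fin n', W (m + j) (w ⟨m + j, by omega⟩) := by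
    intro w
    unfold score
    rw [← Fin.prod_congr' (fun j : Fin k => W j (w j)) hkmn.symm, Fin.prod_univ_add]
    congr 1 <;> exact Finset.prod_congr rfl fun j _ => rfl
  have hIco : (∏ h ∈ Finset.Ico m k, colMax W h) = ∏ j : Fin n', colMax W (m + j) := by
    rw [Finset.prod_Ico_eq_prod_range, ← hn', Fin.prod_univ_eq_prod_range (fun i => colMax W (m + i))]
  have hrange : (∏ h ∈ Finset.range m, colMax W h) = ∏ j : Fin m, colMax W j :=
    (Fin.prod_univ_eq_prod_range (fun i => colMax W i) m).symm
  -- the padding maps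
  set f : (Fin m → A) → (Fin k → A) := fun l i =>
    if h : (i : ℕ) < m then l ⟨i, h⟩ else astar i with hf
  set g : (Fin n' → A) → (Fin k → A) := fun r i =>
    if h : (i : ℕ) < m then astar i else r ⟨(i : ℕ) - m, by omega⟩ with hg
  set Z : Set (Fin k → A) := {w : Fin k → A | score k W w > ε} with hZdef
  set L : Set (Fin m → A) :=
    {l : Fin m → A | (∏ j : Fin m, W j (l j)) * (∏ h ∈ Finset.Ico m k, colMax W h) > ε} with hLdef
  set R : Set (Fin n' → A) :=
    {r : Fin n' → A | (∏ h ∈ Finset.range m, colMax W h) * (∏ j : Fin n', W (m + j) (r j)) > ε} with hRdef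
  have hscoref : ∀ l, score k W (f l) =
      (∏ j : Fin m, W j (l j)) * (∏ h ∈ Finset.Ico m k, colMax W h) := by
    intro l
    rw [hsplit, hIco]
    congr 1
    · apply Finset.prod_congr rfl; intro j _
      simp only [hf]
      rw [dif_pos j.2]
    · apply Finset.prod_congr rfl; intro j _
      simp only [hf]
      rw [dif_neg (by omega), hastar]
  have hscoreg : ∀ r, score k W (g r) =
      (∏ h ∈ Finset.range m, colMax W h) * (∏ j : Fin n', W (m + j) (r j)) := by
    intro r
    rw [hsplit, hrange]
    congr 1
    · apply Finset.prod_congr rfl; intro j _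
      simp only [hg]
      rw [dif_pos j.2, hastar]
    · apply Finset.prod_congr rfl; intro j _
      simp only [hg]
      rw [dif_neg (by omega)]
      have hj : (⟨m + (j:ℕ) - m, by omega⟩ : Fin n') = j := by ext; simp
      rw [hj]
  have hfZ : f '' L ⊆ Z := by
    rintro _ ⟨l, hl, rfl⟩
    simpa [hZdef, hLdef, Set.mem_setOf_eq, hscoref] using hl
  have hgZ : g '' R ⊆ Z := by
    rintro _ ⟨r, hr, rfl⟩
    simpa [hZdef, hRdef, Set.mem_setOf_eq, hscoreg] using hr
  have hfinj : Function.Injective f := by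
    intro l l' h
    funext j
    have := congrFun h ⟨j, j.2.trans_le hm⟩
    simpa [hf, dif_pos j.2] using this
  have hginj : Function.Injective g := by
    intro r r' h
    funext j
    have := congrFun h ⟨m + j, by omega⟩
    simp only [hg, dif_neg (by omega : ¬ (m + (j:ℕ) < m))] at this
    have hj : (⟨m + (j:ℕ) - m, by omega⟩ : Fin n') = j := by ext; simp
    rwa [hj] at this
  have hinter : (f '' L) ∩ (g '' R) ⊆ {fun i : Fin k => astar ↑i} := by
    rintro w ⟨⟨l, -, rfl⟩, ⟨r, -, hgr⟩⟩
    have : ∀ i : Fin k, f l i = astar i := by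
      intro i
      by_cases hi : (i : ℕ) < m
      · rw [← hgr]; simp [hf, hg, hi]
      · simp [hf, hi]
    exact funext this
  have hfinL : L.Finite := Set.toFinite _
  have hfinR : R.Finite := Set.toFinite _
  have hfinZ : Z.Finite := Set.toFinite _
  calc L.ncard + R.ncard = (f '' L).ncard + (g '' R).ncard := by
        rw [Set.ncard_image_of_injective _ hfinj, Set.ncard_image_of_injective _ hginj]
    _ = ((f '' L) ∪ (g '' R)).ncard + ((f '' L) ∩ (g '' R)).ncard := by
        rw [Set.ncard_union_add_ncard_inter _ _ (hfinL.image f) (hfinR.image g)]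
    _ ≤ Z.ncard + 1 := by
        have h1 : ((f '' L) ∪ (g '' R)).ncard ≤ Z.ncard :=
          Set.ncard_le_ncard (Set.union_subset hfZ hgZ) hfinZ
        have h2 : ((f '' L) ∩ (g '' R)).ncard ≤ 1 :=
          le_trans (Set.ncard_le_ncard hinter (Set.finite_singleton _)) (by simp)
        omega
end

section
/- (Dead-prefix lower bound in the worst-case example for branch-and-bound.) In the binary window with identical columns and threshold ε = p^{k−c−1}·(1−p)^{c+1}, the number of dead prefixes ending in 1 whose longest proper prefix is alive is at least C(k, c+1): ∑_{j=1}^{k} |{q ∈ {0,1}^j : q_{j−1} = 1, q is dead, and the length-(j−1) prefix of q is alive}| ≥ C(k, c+1). (This is witnessed by the injection sending each w ∈ {0,1}^k with exactly c+1 ones to its prefix ending at the position of the last 1 of w.) -/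
open Finset

/-- A prefix `q` of length `j` is alive in the binary window with identical columns if
`(∏_l W(l, q_l)) · p^(k−j) > ε`, where the lookahead bound is `L_j = p^(k−j)`. -/
def bAlive (p : ℝ) (k : ℕ) (ε : ℝ) {j : ℕ} (q : Fin j → Bool) : Prop :=
  (∏ l : Fin j, (if q l = true then 1 - p else p)) * p ^ (k - j) > ε

/-- number of ones -/
def hcount {j : ℕ} (q : Fin j → Bool) : ℕ := (Finset.univ.filter fun l => q l = true).card

lemma hcount_le {j : ℕ} (q : Fin j → Bool) : hcount q ≤ j := by
  simpa [hcount] using Finset.card_filter_le Finset.univ (fun l => q l = true)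

lemma prod_eq {j : ℕ} (p : ℝ) (q : Fin j → Bool) :
    (∏ l : Fin j, (if q l = true then 1 - p else p))
      = (1 - p) ^ hcount q * p ^ (j - hcount q) := by
  have hdefn : hcount q = (Finset.univ.filter fun l => q l = true).card := rfl
  have hsum := Finset.card_filter_add_card_filter_not
    (s := (Finset.univ : Finset (Fin j))) (fun l => q l = true)
  simp only [Finset.card_univ, Fintype.card_fin] at hsum
  rw [← Finset.prod_filter_mul_prod_filter_not Finset.univ (fun l => q l = true)]
  have h1 : (∏ l ∈ Finset.univ.filter fun l => q l = true,
      (if q l = true then 1 - p else p)) = (1 - p) ^ hcount q := by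
    rw [Finset.prod_eq_pow_card (b := 1 - p), hdefn]
    intro l hl
    simp only [Finset.mem_filter] at hl
    simp [hl.2]
  have h2 : (∏ l ∈ Finset.univ.filter fun l => ¬ q l = true,
      (if q l = true then 1 - p else p)) = p ^ (j - hcount q) := by
    rw [Finset.prod_eq_pow_card (b := p)]
    · congr 1
      omega
    · intro l hl
      simp only [Finset.mem_filter] at hl
      simp [hl.2]
  rw [h1, h2]

lemma decr (p : ℝ) (hp₁ : 1 / 2 < p) (hp₂ : p < 1) (k a b : ℕ)
    (hab : a < b) (hbk : b ≤ k) :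
    (1 - p) ^ b * p ^ (k - b) < (1 - p) ^ a * p ^ (k - a) := by
  have hr0 : (0:ℝ) < 1 - p := by linarith
  have hrp : 1 - p < p := by linarith
  have hp0 : (0:ℝ) < p := by linarith
  have hka : k - a = (b - a) + (k - b) := by omega
  have hb' : b = a + (b - a) := by omega
  have hpow : (1 - p) ^ (b - a) < p ^ (b - a) :=
    pow_lt_pow_left₀ hrp (le_of_lt hr0) (by omega)
  calc (1 - p) ^ b * p ^ (k - b)
      = (1 - p) ^ a * ((1 - p) ^ (b - a) * p ^ (k - b)) := by
        nth_rewrite 1 [hb']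
        rw [pow_add]; ring
    _ < (1 - p) ^ a * (p ^ (b - a) * p ^ (k - b)) := by
        apply mul_lt_mul_of_pos_left _ (pow_pos hr0 a)
        exact mul_lt_mul_of_pos_right hpow (pow_pos hp0 _)
    _ = (1 - p) ^ a * p ^ (k - a) := by rw [hka, pow_add]

lemma bAlive_iff (p : ℝ) (hp₁ : 1 / 2 < p) (hp₂ : p < 1) (k c : ℕ) (hc : c + 1 ≤ k)
    {j : ℕ} (hj : j ≤ k) (q : Fin j → Bool) :
    bAlive p k (p ^ (k - c - 1) * (1 - p) ^ (c + 1)) q ↔ hcount q ≤ c := by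
  have hh := hcount_le q
  have hform : bAlive p k (p ^ (k - c - 1) * (1 - p) ^ (c + 1)) q ↔
      (1 - p) ^ (c + 1) * p ^ (k - (c + 1)) <
        (1 - p) ^ hcount q * p ^ (k - hcount q) := by
    unfold bAlive
    rw [prod_eq]
    have h1 : k - c - 1 = k - (c + 1) := by omega
    have h2 : (1 - p) ^ hcount q * p ^ (j - hcount q) * p ^ (k - j)
        = (1 - p) ^ hcount q * p ^ (k - hcount q) := by
      rw [mul_assoc, ← pow_add]
      congr 2
      omega
    rw [h1, h2, mul_comm (p ^ (k - (c + 1)))]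
  rw [hform]
  constructor
  · intro hlt
    by_contra hgt
    push_neg at hgt
    rcases eq_or_lt_of_le (show c + 1 ≤ hcount q by omega) with heq | hlt2
    · rw [← heq] at hlt; exact lt_irrefl _ hlt
    · exact absurd (decr p hp₁ hp₂ k (c+1) (hcount q) hlt2 (by omega))
        (not_lt_of_gt hlt)
  · intro hle
    exact decr p hp₁ hp₂ k (hcount q) (c + 1) (by omega) hc

lemma hcount_snoc {j : ℕ} (q : Fin (j + 1) → Bool) (hlast : q (Fin.last j) = true) :
    hcount q = hcount (fun l : Fin j => q l.castSucc) + 1 := by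
  unfold hcount
  rw [Finset.card_filter, Finset.card_filter, Fin.sum_univ_castSucc]
  simp [hlast]

lemma count_eq (j c : ℕ) :
    (Finset.univ.filter fun q : Fin (j + 1) → Bool =>
        q (Fin.last j) = true ∧ hcount (fun l : Fin j => q l.castSucc) = c).card
      = j.choose c := by
  have hpc : j.choose c = (Finset.powersetCard c (Finset.univ : Finset (Fin j))).card := by
    simp [Finset.card_powersetCard]
  rw [hpc]
  refine Finset.card_bij'
    (fun q _ => Finset.univ.filter fun l : Fin j => q l.castSucc = true)
    (fun s _ => (Fin.snoc (fun l => decide (l ∈ s)) true : Fin (j + 1) → Bool))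
    ?_ ?_ ?_ ?_
  · intro q hq
    simp only [Finset.mem_filter, Finset.mem_univ, true_and] at hq
    rw [Finset.mem_powersetCard]
    exact ⟨Finset.subset_univ _, hq.2⟩
  · intro s hs
    rw [Finset.mem_powersetCard] at hs
    simp only [Finset.mem_filter, Finset.mem_univ, true_and]
    constructor
    · exact Fin.snoc_last _ _
    · have heq : (Finset.univ.filter fun l : Fin j => decide (l ∈ s) = true) = s := by
        ext l; simp
      unfold hcount
      simp only [Fin.snoc_castSucc]
      rw [heq]
      exact hs.2
  · intro q hq
    simp only [Finset.mem_filter, Finset.mem_univ, true_and] at hq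
    funext l
    refine Fin.lastCases ?_ ?_ l
    · rw [Fin.snoc_last, hq.1]
    · intro i
      rw [Fin.snoc_castSucc]
      simp
  · intro s hs
    ext l
    simp [Fin.snoc_castSucc]

/-- Dead-prefix lower bound in the worst-case example for branch-and-bound: the number of dead
prefixes ending in `1` whose longest proper prefix is alive is at least `C(k, c+1)`.
(Prefix lengths `1, …, k` are indexed here as `j + 1` for `j ∈ range k`.) -/
theorem dead_prefixes_lower_bound
    (p : ℝ) (hp₁ : 1 / 2 < p) (hp₂ : p < 1) (k c : ℕ) (hk : 1 ≤ k) (hc : c + 1 ≤ k) :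
    Nat.choose k (c + 1) ≤
      ∑ j ∈ Finset.range k,
        Set.ncard {q : Fin (j + 1) → Bool |
          q (Fin.last j) = true ∧
          ¬ bAlive p k (p ^ (k - c - 1) * (1 - p) ^ (c + 1)) q ∧
          bAlive p k (p ^ (k - c - 1) * (1 - p) ^ (c + 1))
            (fun l : Fin j => q l.castSucc)} := by
  have key : ∀ j ∈ Finset.range k,
      Set.ncard {q : Fin (j + 1) → Bool |
          q (Fin.last j) = true ∧
          ¬ bAlive p k (p ^ (k - c - 1) * (1 - p) ^ (c + 1)) q ∧
          bAlive p k (p ^ (k - c - 1) * (1 - p) ^ (c + 1))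
            (fun l : Fin j => q l.castSucc)} = j.choose c := by
    intro j hj
    rw [Finset.mem_range] at hj
    have hset : {q : Fin (j + 1) → Bool |
          q (Fin.last j) = true ∧
          ¬ bAlive p k (p ^ (k - c - 1) * (1 - p) ^ (c + 1)) q ∧
          bAlive p k (p ^ (k - c - 1) * (1 - p) ^ (c + 1))
            (fun l : Fin j => q l.castSucc)}
        = {q : Fin (j + 1) → Bool |
          q (Fin.last j) = true ∧ hcount (fun l : Fin j => q l.castSucc) = c} := by
      ext q
      simp only [Set.mem_setOf_eq]
      constructor
      · rintro ⟨h1, h2, h3⟩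
        refine ⟨h1, ?_⟩
        rw [bAlive_iff p hp₁ hp₂ k c hc (by omega)] at h2 h3
        rw [hcount_snoc q h1] at h2
        omega
      · rintro ⟨h1, h2⟩
        refine ⟨h1, ?_, ?_⟩
        · rw [bAlive_iff p hp₁ hp₂ k c hc (by omega), hcount_snoc q h1]; omega
        · rw [bAlive_iff p hp₁ hp₂ k c hc (by omega)]; omega
    rw [hset]
    rw [Set.ncard_eq_toFinset_card', Set.toFinset_setOf]
    exact count_eq j c
  rw [Finset.sum_congr rfl key]
  have hockey : ∀ n : ℕ, ∑ j ∈ Finset.range n, j.choose c = n.choose (c + 1) := by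
    intro n
    induction n with
    | zero => simp
    | succ m ih =>
      rw [Finset.sum_range_succ, ih]
      have h := Nat.choose_succ_succ m c
      simp only [Nat.succ_eq_add_one] at h
      omega
  rw [hockey]
end

section
/- (Bound for the total prefix–suffix combination work over all non-root recursion calls of the divide-and-conquer algorithm, used in Theorem 2.) For all integers σ ≥ 2 and n ≥ 1, with k = 2^n: ∑_{i=1}^{n} 2^i · σ^{2^{n−i}} ≤ 2 · (2^n − 1) · σ^{2^{n−1}}, i.e., ∑_{i=1}^{n} 2^i · σ^{k/2^i} ≤ 2·(k − 1)·σ^{k/2}. -/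
lemma aux_geom (n : ℕ) : ∑ i ∈ Finset.Icc 1 n, 2 ^ i = 2 ^ (n + 1) - 2 := by
  induction n with
  | zero => simp
  | succ n ih =>
    rw [Finset.sum_Icc_succ_top (by omega), ih]
    have h1 : 2 ≤ 2 ^ (n + 1) := Nat.one_lt_two_pow (by omega)
    ring_nf
    omega

/-- Bound for the total prefix–suffix combination work over all non-root recursion calls of the
divide-and-conquer algorithm: for `σ ≥ 2`, `n ≥ 1` and `k = 2^n`,
`∑_{i=1}^{n} 2^i · σ^(k/2^i) ≤ 2 · (k − 1) · σ^(k/2)`. -/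
theorem dc_combination_work_bound
    (σ n : ℕ) (hσ : 2 ≤ σ) (hn : 1 ≤ n) :
    ∑ i ∈ Finset.Icc 1 n, 2 ^ i * σ ^ (2 ^ (n - i)) ≤
      2 * (2 ^ n - 1) * σ ^ (2 ^ (n - 1)) := by
  calc ∑ i ∈ Finset.Icc 1 n, 2 ^ i * σ ^ (2 ^ (n - i))
      ≤ ∑ i ∈ Finset.Icc 1 n, 2 ^ i * σ ^ (2 ^ (n - 1)) := by
        apply Finset.sum_le_sum
        intro i hi
        have hi1 : 1 ≤ i := (Finset.mem_Icc.mp hi).1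
        have : 2 ^ (n - i) ≤ 2 ^ (n - 1) := Nat.pow_le_pow_right (by norm_num) (by omega)
        exact Nat.mul_le_mul_left _ (Nat.pow_le_pow_right (by omega) this)
    _ = (2 ^ (n + 1) - 2) * σ ^ (2 ^ (n - 1)) := by rw [← Finset.sum_mul, aux_geom]
    _ = 2 * (2 ^ n - 1) * σ ^ (2 ^ (n - 1)) := by
        congr 1
        have : 1 ≤ 2 ^ n := Nat.one_le_two_pow
        rw [pow_succ]
        omega
end
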